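/- arXiv:2310.14529 — 7 statements merged into one kernel-verified Lean document; each statement's English description precedes it below -/
import Mathlib

section
/- For any nonzero q ∈ ℂ and any integers n₁,…,n₆, the operators defined below satisfy the tetrahedron equation P^{(n₅−n₆)}_{456} ∘ P^{(n₃−n₆)}_{236} ∘ P^{(n₃−n₅)}_{135} ∘ P^{(n₂−n₄)}_{124} = P^{(n₂−n₄)}_{124} ∘ P^{(n₃−n₅)}_{135} ∘ P^{(n₃−n₆)}_{236} ∘ P^{(n₅−n₆)}_{456} as linear endomorphisms of V₆. -/
/- STATEMENT 0: The monomial operators P^{(r)}_{xyz} on the space V₆ of finitely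
supported functions ℤ⁶ → ℂ satisfy the tetrahedron equation
P^{(n₅−n₆)}_{456} P^{(n₃−n₆)}_{236} P^{(n₃−n₅)}_{135} P^{(n₂−n₄)}_{124}
= P^{(n₂−n₄)}_{124} P^{(n₃−n₅)}_{135} P^{(n₃−n₆)}_{236} P^{(n₅−n₆)}_{456}. -/

noncomputable section

/-- V₆: finitely supported functions ℤ⁶ → ℂ, with basis |m⟩, m ∈ ℤ⁶. -/
abbrev V6 : Type := (Fin 6 → ℤ) →₀ ℂ

/-- The operator P^{(r)}_{xyz} defined on the basis by
`P^{(r)}_{xyz}|m⟩ = q^{(m_z−r−m_y)(m_z−r−m_y−2m_x)−2r m_x} |m′⟩`, where `m′` agrees with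
`m` except `m′_x = m_x + m_y − m_z + r`, `m′_y = m_z − r`, `m′_z = m_y`. -/
def Pmon (q : ℂ) (r : ℤ) (x y z : Fin 6) : V6 →ₗ[ℂ] V6 :=
  Finsupp.lsum ℂ fun m =>
    (q ^ ((m z - r - m y) * (m z - r - m y - 2 * m x) - 2 * r * m x)) •
      Finsupp.lsingle (fun t =>
        if t = x then m x + m y - m z + r
        else if t = y then m z - r
        else if t = z then m y
        else m t)

lemma Pmon_single (q : ℂ) (r : ℤ) (x y z : Fin 6) (m : Fin 6 → ℤ) (c : ℂ) :
    Pmon q r x y z (Finsupp.single m c) =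
      (q ^ ((m z - r - m y) * (m z - r - m y - 2 * m x) - 2 * r * m x)) •
        Finsupp.single (fun t =>
          if t = x then m x + m y - m z + r
          else if t = y then m z - r
          else if t = z then m y
          else m t) c := by
  simp [Pmon]

/-- The tetrahedron equation for the monomial operators (indices 1,…,6 are
represented 0-based as 0,…,5). -/
theorem tetrahedron_monomial (q : ℂ) (hq : q ≠ 0) (n1 n2 n3 n4 n5 n6 : ℤ) :
    (Pmon q (n5 - n6) 3 4 5).comp ((Pmon q (n3 - n6) 1 2 5).comp
      ((Pmon q (n3 - n5) 0 2 4).comp (Pmon q (n2 - n4) 0 1 3))) =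
    (Pmon q (n2 - n4) 0 1 3).comp ((Pmon q (n3 - n5) 0 2 4).comp
      ((Pmon q (n3 - n6) 1 2 5).comp (Pmon q (n5 - n6) 3 4 5))) := by
  apply Finsupp.lhom_ext
  intro m c
  simp only [LinearMap.comp_apply, Pmon_single, map_smul, smul_smul, ← zpow_add₀ hq,
    Fin.reduceEq, if_true, if_false, ite_true, ite_false, reduceIte]
  congr 1
  · congr 1
    ring
  · congr 1
    funext t
    fin_cases t <;> simp <;> ring

end
end

section
/- For each basis vector |i,j,k⟩ the composite R|i,j,k⟩ = D₁(D₂(P(D₃(D₄|i,j,k⟩)))) is well defined (every sum arising at each point of ℤ³ has only finitely many nonzero terms), and its value at (a,b,c) ∈ ℤ³ is zero unless a+b = i+j and b+r−k ≥ 0, in which case it equals (κ₁/κ₃)^{b+r−k} · q^{(c−k+r)(c+k−r−2b)+2i(c−k)} · ∏_{n≥0}(1+κ₃q^{2c−2b+2n+1}) · ∏_{n≥0}(1−q^{2+2j−2c+2n}) / [ ∏_{n≥1}(1−q^{2n}) · ∏_{n≥0}(1+κ₂q^{2j−2k+2n+1}) · ∏_{t=0}^{b+r−k−1}(1−q^{2k−2b−2r+2t})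 ]. -/
/- STATEMENT 1: well-definedness and explicit matrix elements of the operator
R = D₁∘D₂∘P∘D₃∘D₄ on the basis vector |i,j,k⟩. -/

noncomputable section

/-- The space of all functions ℤ³ → ℂ (finitely supported ones form V₃,
with |i,j,k⟩ the indicator of (i,j,k)). -/
abbrev W3 : Type := ℤ × ℤ × ℤ → ℂ

/-- The basis vector |i,j,k⟩ of V₃, as a function ℤ³ → ℂ. -/
def delta (i j k : ℤ) : W3 := fun p => if p = (i, j, k) then 1 else 0

/-- (q²;q²)_m = ∏_{t=1}^{m}(1−q^{2t}). -/
def qpoch (q : ℂ) (m : ℕ) : ℂ := ∏ t ∈ Finset.range m, (1 - q ^ (2 * (t + 1)))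

/-- D₄|i,j,k⟩ = [∏_{n≥0}(1+κ₂q^{2j−2k+2n+1})]⁻¹ |i,j,k⟩ (diagonal operator,
written on functions). -/
def D4 (q κ₂ : ℂ) (f : W3) : W3 := fun p =>
  (∏' n : ℕ, (1 + κ₂ * q ^ (2 * p.2.1 - 2 * p.2.2 + 2 * (n : ℤ) + 1)))⁻¹ * f p

/-- The m-th term of the sum defining D₃ at the point p:
D₃|i,j,k⟩ = Σ_{m≥0} (−qκ₁κ₃⁻¹q^{2i})^m/(q²;q²)_m |i,j,k+m⟩, written on functions. -/
def D3term (q κ₁ κ₃ : ℂ) (f : W3) (p : ℤ × ℤ × ℤ) (m : ℕ) : ℂ :=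
  ((-q * κ₁ * κ₃⁻¹ * q ^ (2 * p.1)) ^ m / qpoch q m) * f (p.1, p.2.1, p.2.2 - m)

def D3 (q κ₁ κ₃ : ℂ) (f : W3) : W3 := fun p => ∑' m : ℕ, D3term q κ₁ κ₃ f p m

/-- P|i,j,k⟩ = q^{(k−r−j)(k−r−j−2i)−2ri}|i+j−k+r, k−r, j⟩, extended to all
functions through the corresponding bijection of ℤ³. -/
def Pop (q : ℂ) (r : ℤ) (f : W3) : W3 := fun p =>
  q ^ ((p.2.1 - p.2.2) * (p.2.1 - p.2.2 - 2 * (p.1 + p.2.1 - p.2.2))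
        - 2 * r * (p.1 + p.2.1 - p.2.2)) *
    f (p.1 + p.2.1 - p.2.2, p.2.2, p.2.1 + r)

/-- The n-th term of the sum defining D₂ at the point (a,b,c):
(D₂f)(a,b,c) = Σ_{n≥0} [q^{n²−2an}/(q²;q²)_n] f(a,b,c+n). -/
def D2term (q : ℂ) (f : W3) (p : ℤ × ℤ × ℤ) (n : ℕ) : ℂ :=
  (q ^ ((n : ℤ) ^ 2 - 2 * p.1 * (n : ℤ)) / qpoch q n) * f (p.1, p.2.1, p.2.2 + n)

def D2 (q : ℂ) (f : W3) : W3 := fun p => ∑' n : ℕ, D2term q f p n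

/-- (D₁f)(a,b,c) = ∏_{n≥0}(1+κ₃q^{2c−2b+2n+1}) · f(a,b,c). -/
def D1 (q κ₃ : ℂ) (f : W3) : W3 := fun p =>
  (∏' n : ℕ, (1 + κ₃ * q ^ (2 * p.2.2 - 2 * p.2.1 + 2 * (n : ℤ) + 1))) * f p

/-- R = D₁∘D₂∘P∘D₃∘D₄. -/
def Rop (q κ₁ κ₂ κ₃ : ℂ) (r : ℤ) (f : W3) : W3 :=
  D1 q κ₃ (D2 q (Pop q r (D3 q κ₁ κ₃ (D4 q κ₂ f))))


open Complex Finset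

/-- a tprod with a zero factor is zero -/
lemma tprod_eq_zero_of_factor (f : ℕ → ℂ) (n₀ : ℕ) (h : f n₀ = 0) : ∏' n, f n = 0 := by
  have : HasProd f 0 := by
    have hev : ∀ᶠ s : Finset ℕ in Filter.atTop, ∏ i ∈ s, f i = 0 := by
      filter_upwards [Filter.eventually_ge_atTop ({n₀} : Finset ℕ)] with s hs
      exact Finset.prod_eq_zero (hs (Finset.mem_singleton_self n₀)) h
    exact Filter.Tendsto.congr' (hev.mono fun s hs => hs.symm) tendsto_const_nhds
  exact this.tprod_eq

lemma hasProd_one_add (x w : ℂ) (hx : ‖x‖ < 1) (hne : ∀ n : ℕ, 1 + w * x ^ n ≠ 0) :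
    HasProd (fun n : ℕ => 1 + w * x ^ n)
      (Complex.exp (∑' n : ℕ, Complex.log (1 + w * x ^ n))) := by
  have hsum : Summable (fun n : ℕ => Complex.log (1 + w * x ^ n)) := by
    have hgeo : Summable (fun n : ℕ => (3/2 : ℝ) * (‖w‖ * ‖x‖ ^ n)) :=
      ((summable_geometric_of_lt_one (norm_nonneg x) hx).mul_left ‖w‖).mul_left _
    apply Summable.of_norm_bounded_eventually hgeo
    rw [Nat.cofinite_eq_atTop]
    have htend : Filter.Tendsto (fun n : ℕ => ‖w * x ^ n‖) Filter.atTop (nhds 0) := by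
      have := (tendsto_pow_atTop_nhds_zero_of_norm_lt_one hx).norm.const_mul ‖w‖
      simpa [norm_mul, norm_pow] using this
    have hev : ∀ᶠ n : ℕ in Filter.atTop, ‖w * x ^ n‖ ≤ 1/2 := by
      exact htend.eventually (ge_mem_nhds (by norm_num : (0:ℝ) < 1/2))
    filter_upwards [hev] with n hn
    calc ‖Complex.log (1 + w * x ^ n)‖ ≤ 3/2 * ‖w * x ^ n‖ :=
          Complex.norm_log_one_add_half_le_self hn
      _ = 3/2 * (‖w‖ * ‖x‖ ^ n) := by rw [norm_mul, norm_pow]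
  exact hsum.hasSum.cexp.congr_fun fun n => (Complex.exp_log (hne n)).symm

lemma multipliable_one_add' (x w : ℂ) (hx : ‖x‖ < 1) (hne : ∀ n : ℕ, 1 + w * x ^ n ≠ 0) :
    Multipliable (fun n : ℕ => 1 + w * x ^ n) :=
  ⟨_, hasProd_one_add x w hx hne⟩

lemma tprod_one_add_ne_zero (x w : ℂ) (hx : ‖x‖ < 1) (hne : ∀ n : ℕ, 1 + w * x ^ n ≠ 0) :
    (∏' n : ℕ, (1 + w * x ^ n)) ≠ 0 := by
  rw [(hasProd_one_add x w hx hne).tprod_eq]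
  exact Complex.exp_ne_zero _

lemma zpow_finset_sum (q : ℂ) (hq : q ≠ 0) (s : Finset ℕ) (e : ℕ → ℤ) :
    ∏ t ∈ s, q ^ e t = q ^ (∑ t ∈ s, e t) := by
  classical
  induction s using Finset.induction_on with
  | empty => simp
  | @insert a s' h ih => rw [Finset.prod_insert h, Finset.sum_insert h, ih, zpow_add₀ hq]

lemma gauss_sum_int (m : ℕ) : (∑ t ∈ Finset.range m, (t:ℤ)) * 2 = (m:ℤ) * ((m:ℤ) - 1) := by
  induction m with
  | zero => simp
  | succ n ih => rw [Finset.sum_range_succ]; push_cast; push_cast at ih; ring_nf; ring_nf at ih; omega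

section Qlemmas
variable {q : ℂ}

lemma one_sub_pow_ne_zero' (hq1 : ‖q‖ < 1) (s : ℕ) (hs : s ≠ 0) : 1 - q ^ s ≠ 0 := by
  intro h
  have h1 : q ^ s = 1 := by linear_combination -h
  have h2 : ‖q ^ s‖ < 1 := by
    rw [norm_pow]
    exact pow_lt_one₀ (norm_nonneg q) hq1 hs
  rw [h1, norm_one] at h2
  exact lt_irrefl _ h2

lemma one_sub_zpow_ne_zero (hq1 : ‖q‖ < 1) (s : ℤ) (hs : 1 ≤ s) : 1 - q ^ s ≠ 0 := by
  have h : q ^ s = q ^ s.toNat := by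
    rw [← zpow_natCast, Int.toNat_of_nonneg (by omega)]
  rw [h]
  exact one_sub_pow_ne_zero' hq1 s.toNat (by omega)


lemma prod_form_aux (hq0 : q ≠ 0) (v : ℂ) (e : ℤ) :
    (fun n : ℕ => 1 + v * q ^ (e + 2 * (n:ℤ))) = fun n : ℕ => 1 + (v * q ^ e) * (q^2 : ℂ) ^ n := by
  funext n
  rw [zpow_add₀ hq0, show (2:ℤ) * (n:ℤ) = ((2*n : ℕ) : ℤ) by push_cast; ring, zpow_natCast,
    pow_mul, mul_assoc]

lemma multipliable_aux (hq0 : q ≠ 0) (hq1 : ‖q‖ < 1) (v : ℂ) (e : ℤ) (hne : ∀ n : ℕ, 1 + v * q ^ (e + 2*(n:ℤ)) ≠ 0) :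
    Multipliable (fun n : ℕ => 1 + v * q ^ (e + 2*(n:ℤ))) := by
  rw [prod_form_aux hq0]
  refine multipliable_one_add' _ _ ?_ ?_
  · rw [norm_pow]
    exact pow_lt_one₀ (norm_nonneg q) hq1 two_ne_zero
  · intro n
    have := hne n
    rwa [funext_iff.1 (prod_form_aux hq0 v e) n] at this

lemma tprod_ne_zero_aux (hq0 : q ≠ 0) (hq1 : ‖q‖ < 1) (v : ℂ) (e : ℤ) (hne : ∀ n : ℕ, 1 + v * q ^ (e + 2*(n:ℤ)) ≠ 0) :
    (∏' n : ℕ, (1 + v * q ^ (e + 2*(n:ℤ)))) ≠ 0 := by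
  rw [prod_form_aux hq0]
  refine tprod_one_add_ne_zero _ _ ?_ ?_
  · rw [norm_pow]
    exact pow_lt_one₀ (norm_nonneg q) hq1 two_ne_zero
  · intro n
    have := hne n
    rwa [funext_iff.1 (prod_form_aux hq0 v e) n] at this

lemma hfin_aux (hq0 : q ≠ 0) (m : ℕ) :
    ∏ t ∈ Finset.range m, (1 - q ^ (2*(t:ℤ) - 2*(m:ℤ)))
      = (-1)^m * q ^ (-(m:ℤ)^2 - m) * ∏ t ∈ Finset.range m, (1 - q ^ (2*(t:ℤ) + 2)) := by
  have stepA : ∏ t ∈ Finset.range m, (1 - q ^ (2*(t:ℤ) - 2*(m:ℤ)))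
      = ∏ t ∈ Finset.range m, (((-1) * q ^ (2*(t:ℤ) - 2*(m:ℤ))) * (1 - q ^ (2*(m:ℤ) - 2*(t:ℤ)))) := by
    refine Finset.prod_congr rfl fun t _ => ?_
    have h1 : q ^ (2*(t:ℤ) - 2*(m:ℤ)) * q ^ (2*(m:ℤ) - 2*(t:ℤ)) = 1 := by
      rw [← zpow_add₀ hq0, show (2*(t:ℤ) - 2*(m:ℤ)) + (2*(m:ℤ) - 2*(t:ℤ)) = 0 by ring, zpow_zero]
    linear_combination -h1
  rw [stepA, Finset.prod_mul_distrib, Finset.prod_mul_distrib, Finset.prod_const,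
    Finset.card_range, zpow_finset_sum q hq0]
  have stepD : ∑ t ∈ Finset.range m, (2*(t:ℤ) - 2*(m:ℤ)) = -(m:ℤ)^2 - m := by
    rw [Finset.sum_sub_distrib, Finset.sum_const, Finset.card_range, ← Finset.mul_sum]
    have := gauss_sum_int m
    push_cast
    linear_combination 1 * this
  have stepE : ∏ t ∈ Finset.range m, (1 - q ^ (2*(m:ℤ) - 2*(t:ℤ)))
      = ∏ t ∈ Finset.range m, (1 - q ^ (2*(t:ℤ) + 2)) := by
    rw [← Finset.prod_range_reflect (fun t => 1 - q ^ (2*(t:ℤ) + 2)) m]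
    refine Finset.prod_congr rfl fun t ht => ?_
    have ht' := Finset.mem_range.1 ht
    have : 2*((m - 1 - t : ℕ):ℤ) + 2 = 2*(m:ℤ) - 2*(t:ℤ) := by omega
    rw [this]
  rw [stepD, stepE]

end Qlemmas

lemma final_algebra (P1 Pj C2 Qn Qm u v s y1 y2 y3 y4 y5 : ℂ)
    (hPj : Pj ≠ 0) (hC2 : C2 ≠ 0) (hQn : Qn ≠ 0) (hQm : Qm ≠ 0) (hy5 : y5 ≠ 0)
    (hs : s * s = 1) (hy : y1 * y2 * y3 * y5 = y4) :
    P1 * (y1 / Qn * (y2 * (s * u * v * y3 / Qm * C2⁻¹)))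
      = u * v * y4 * P1 * Pj / (Qn * Pj * C2 * (s * y5 * Qm)) := by
  have hs0 : s ≠ 0 := by
    intro h; rw [h, zero_mul] at hs; exact one_ne_zero hs.symm
  rw [← hy]
  field_simp
  ring_nf
  linear_combination (P1 * y1 * y2 * u * v * y3) * hs

theorem Rop_matrix_elements (q κ₁ κ₂ κ₃ : ℂ) (r : ℤ)
    (hq0 : q ≠ 0) (hq1 : ‖q‖ < 1)
    (hκ₁ : κ₁ ≠ 0) (hκ₂ : κ₂ ≠ 0) (hκ₃ : κ₃ ≠ 0)
    (hrel : κ₂ = κ₃ * q ^ (2 * r))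
    (hreg : ∀ m : ℤ, κ₂ ≠ -q ^ (2 * m + 1))
    (i j k : ℤ) :
    -- well-definedness: the sum in D₃ applied to D₄|i,j,k⟩ has finitely many
    -- nonzero terms at each point of ℤ³
    (∀ p : ℤ × ℤ × ℤ,
      {m : ℕ | D3term q κ₁ κ₃ (D4 q κ₂ (delta i j k)) p m ≠ 0}.Finite) ∧
    -- well-definedness: the sum in D₂ applied to P(D₃(D₄|i,j,k⟩)) has finitely
    -- many nonzero terms at each point of ℤ³
    (∀ p : ℤ × ℤ × ℤ,
      {n : ℕ | D2term q (Pop q r (D3 q κ₁ κ₃ (D4 q κ₂ (delta i j k)))) p n ≠ 0}.Finite) ∧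
    -- the explicit value of R|i,j,k⟩ at (a,b,c)
    (∀ a b c : ℤ,
      Rop q κ₁ κ₂ κ₃ r (delta i j k) (a, b, c) =
        if a + b = i + j ∧ 0 ≤ b + r - k then
          (κ₁ / κ₃) ^ (b + r - k)
            * q ^ ((c - k + r) * (c + k - r - 2 * b) + 2 * i * (c - k))
            * (∏' n : ℕ, (1 + κ₃ * q ^ (2 * c - 2 * b + 2 * (n : ℤ) + 1)))
            * (∏' n : ℕ, (1 - q ^ (2 + 2 * j - 2 * c + 2 * (n : ℤ))))
            / ((∏' n : ℕ, (1 - q ^ (2 * (n : ℤ) + 2)))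
                * (∏' n : ℕ, (1 + κ₂ * q ^ (2 * j - 2 * k + 2 * (n : ℤ) + 1)))
                * (∏ t ∈ Finset.range (b + r - k).toNat,
                    (1 - q ^ (2 * k - 2 * b - 2 * r + 2 * (t : ℤ)))))
        else 0) := by
  classical
  set C2 : ℂ := ∏' n : ℕ, (1 + κ₂ * q ^ (2 * j - 2 * k + 2 * (n : ℤ) + 1)) with hC2def
  -- D4 on the basis vector
  have hD4 : D4 q κ₂ (delta i j k) = fun p => if p = (i, j, k) then C2⁻¹ else 0 := by
    funext p
    by_cases h : p = (i, j, k)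
    · subst h
      simp only [D4, delta]
      simp
      exact hC2def.symm
    · simp only [D4, delta, if_neg h, mul_zero]
  -- D3 ∘ D4 on the basis vector
  have hD3 : ∀ x y z : ℤ, D3 q κ₁ κ₃ (D4 q κ₂ (delta i j k)) (x, y, z) =
      if x = i ∧ y = j ∧ k ≤ z then
        (-q * κ₁ * κ₃⁻¹ * q ^ (2 * i)) ^ (z - k).toNat / qpoch q (z - k).toNat * C2⁻¹
      else 0 := by
    intro x y z
    have hterm : ∀ m : ℕ, D3term q κ₁ κ₃ (D4 q κ₂ (delta i j k)) (x, y, z) m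
        = ((-q * κ₁ * κ₃⁻¹ * q ^ (2 * x)) ^ m / qpoch q m) *
          (if ((x : ℤ), (y : ℤ), z - (m : ℤ)) = ((i : ℤ), (j : ℤ), (k : ℤ)) then C2⁻¹ else 0) := by
      intro m
      simp only [D3term, hD4]
    by_cases h : x = i ∧ y = j ∧ k ≤ z
    · obtain ⟨hx, hy, hz⟩ := h
      rw [if_pos ⟨hx, hy, hz⟩]
      have hmain : D3term q κ₁ κ₃ (D4 q κ₂ (delta i j k)) (x, y, z) (z - k).toNat
          = (-q * κ₁ * κ₃⁻¹ * q ^ (2 * i)) ^ (z - k).toNat / qpoch q (z - k).toNat * C2⁻¹ := by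
        rw [hterm, if_pos (by simp only [Prod.mk.injEq]; refine ⟨hx, hy, by omega⟩), hx]
      rw [D3, tsum_eq_single (z - k).toNat ?_, hmain]
      intro m hm
      rw [hterm, if_neg, mul_zero]
      intro hc
      simp only [Prod.mk.injEq] at hc
      exact hm (by omega)
    · rw [if_neg h, D3]
      have hzero : ∀ m : ℕ, D3term q κ₁ κ₃ (D4 q κ₂ (delta i j k)) (x, y, z) m = 0 := by
        intro m
        rw [hterm, if_neg, mul_zero]
        intro hc
        simp only [Prod.mk.injEq] at hc
        exact h ⟨hc.1, hc.2.1, by omega⟩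
      rw [tsum_congr hzero, tsum_zero]
  -- P ∘ D3 ∘ D4 on the basis vector
  have hG : ∀ x y z : ℤ, Pop q r (D3 q κ₁ κ₃ (D4 q κ₂ (delta i j k))) (x, y, z) =
      if x + y - z = i ∧ z = j ∧ k ≤ y + r then
        q ^ ((y - z) * (y - z - 2 * (x + y - z)) - 2 * r * (x + y - z)) *
          ((-q * κ₁ * κ₃⁻¹ * q ^ (2 * i)) ^ (y + r - k).toNat / qpoch q (y + r - k).toNat * C2⁻¹)
      else 0 := by
    intro x y z
    simp only [Pop]
    rw [hD3 (x + y - z) z (y + r)]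
    by_cases h : x + y - z = i ∧ z = j ∧ k ≤ y + r
    · rw [if_pos h, if_pos h]
    · rw [if_neg h, if_neg h, mul_zero]
  refine ⟨?_, ?_, ?_⟩
  · -- finiteness for D3
    intro p
    apply Set.Finite.subset (Set.finite_singleton (p.2.2 - k).toNat)
    intro m hm
    simp only [Set.mem_setOf_eq] at hm
    simp only [D3term, hD4] at hm
    have h2 : ((p.1 : ℤ), (p.2.1 : ℤ), p.2.2 - (m : ℤ)) = ((i : ℤ), (j : ℤ), (k : ℤ)) := by
      by_contra hPC
      rw [if_neg hPC, mul_zero] at hm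
      exact hm rfl
    simp only [Prod.mk.injEq] at h2
    simp only [Set.mem_singleton_iff]
    omega
  · -- finiteness for D2
    intro p
    apply Set.Finite.subset (Set.finite_singleton (j - p.2.2).toNat)
    intro n hn
    simp only [Set.mem_setOf_eq] at hn
    simp only [D2term] at hn
    rw [hG p.1 p.2.1 (p.2.2 + n)] at hn
    have h2 : p.1 + p.2.1 - (p.2.2 + (n : ℤ)) = i ∧ p.2.2 + (n : ℤ) = j ∧ k ≤ p.2.1 + r := by
      by_contra hPC
      rw [if_neg hPC, mul_zero] at hn
      exact hn rfl
    simp only [Set.mem_singleton_iff]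
    omega
  · -- the explicit value
    intro a b c
    have hRop : Rop q κ₁ κ₂ κ₃ r (delta i j k) (a, b, c)
        = (∏' n : ℕ, (1 + κ₃ * q ^ (2 * c - 2 * b + 2 * (n : ℤ) + 1))) *
          ∑' n : ℕ, D2term q (Pop q r (D3 q κ₁ κ₃ (D4 q κ₂ (delta i j k)))) (a, b, c) n := by
      simp only [Rop, D1, D2]
    by_cases hcond : a + b = i + j ∧ 0 ≤ b + r - k
    · obtain ⟨hab, hbk⟩ := hcond
      rw [if_pos ⟨hab, hbk⟩, hRop]
      by_cases hcj : c ≤ j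
      · -- main case
        have hQne : ∀ s : ℕ, qpoch q s ≠ 0 := fun s => by
          rw [qpoch]
          exact Finset.prod_ne_zero_iff.2 fun t _ => one_sub_pow_ne_zero' hq1 _ (by omega)
        set n₀ : ℕ := (j - c).toNat with hn₀def
        set M : ℕ := (b + r - k).toNat with hMdef
        have hn₀ : (n₀ : ℤ) = j - c := by omega
        have hm : (M : ℤ) = b + r - k := by omega
        have hsingle : (∑' n : ℕ,
              D2term q (Pop q r (D3 q κ₁ κ₃ (D4 q κ₂ (delta i j k)))) (a, b, c) n)
            = q ^ ((n₀:ℤ)^2 - 2*a*(n₀:ℤ)) / qpoch q n₀ *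
              (q ^ ((b - (c+(n₀:ℤ))) * (b - (c+(n₀:ℤ)) - 2*(a + b - (c+(n₀:ℤ))))
                    - 2*r*(a + b - (c+(n₀:ℤ)))) *
                ((-q * κ₁ * κ₃⁻¹ * q ^ (2*i)) ^ M / qpoch q M * C2⁻¹)) := by
          rw [tsum_eq_single n₀ ?_]
          · simp only [D2term]
            rw [hG a b (c + n₀), if_pos ⟨by omega, by omega, by omega⟩]
          · intro n hn
            simp only [D2term]
            rw [hG a b (c + n), if_neg, mul_zero]
            rintro ⟨-, h2, -⟩
            exact hn (by omega)
        rw [hsingle]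
        -- rewrite the κ-power
        have hκpow : (κ₁ / κ₃) ^ (b + r - k) = κ₁ ^ M * κ₃⁻¹ ^ M := by
          rw [show b + r - k = ((M:ℕ):ℤ) by omega, zpow_natCast, div_eq_mul_inv, mul_pow]
        -- identify the shifted product
        have hqpoch_conv : ∀ s : ℕ, (∏ t ∈ Finset.range s, (1 - q ^ (2*(t:ℤ) + 2))) = qpoch q s := by
          intro s
          rw [qpoch]
          refine Finset.prod_congr rfl fun t _ => ?_
          rw [← zpow_natCast q (2*(t+1))]
          congr 1
        have hPF : (∏' n : ℕ, (1 - q ^ (2*(n:ℤ) + 2)))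
            = qpoch q n₀ * (∏' n : ℕ, (1 - q ^ (2 + 2*j - 2*c + 2*(n:ℤ)))) := by
          have hfun : (fun t : ℕ => 1 - q ^ (2*(((t + n₀ : ℕ)):ℤ) + 2))
              = fun t : ℕ => 1 + (-1) * q ^ ((2*(n₀:ℤ) + 2) + 2*(t:ℤ)) := by
            funext t
            rw [show 2*(((t + n₀ : ℕ)):ℤ) + 2 = (2*(n₀:ℤ) + 2) + 2*(t:ℤ) by push_cast; ring]
            ring
          have hmult : Multipliable (fun t : ℕ => 1 - q ^ (2*(((t + n₀ : ℕ)):ℤ) + 2)) := by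
            rw [hfun]
            exact multipliable_aux hq0 hq1 (-1) _ (fun t => by
              have := one_sub_zpow_ne_zero hq1 ((2*(n₀:ℤ) + 2) + 2*(t:ℤ)) (by omega)
              intro h
              exact this (by linear_combination h))
          have hshift := Multipliable.prod_mul_tprod_nat_mul' (f := fun t : ℕ => 1 - q ^ (2*(t:ℤ) + 2)) hmult
          rw [hqpoch_conv] at hshift
          rw [← hshift]
          congr 1
          refine tprod_congr fun t => ?_
          show 1 - q ^ (2*(((t + n₀ : ℕ)):ℤ) + 2) = _
          rw [show 2*(((t + n₀ : ℕ)):ℤ) + 2 = 2 + 2*j - 2*c + 2*(t:ℤ) by omega]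
        have hPFne : (∏' n : ℕ, (1 - q ^ (2*(n:ℤ) + 2))) ≠ 0 := by
          have hfun : (fun n : ℕ => 1 - q ^ (2*(n:ℤ) + 2))
              = fun n : ℕ => 1 + (-1) * q ^ ((2:ℤ) + 2*(n:ℤ)) := by
            funext t
            rw [show 2*(t:ℤ) + 2 = (2:ℤ) + 2*(t:ℤ) by ring]
            ring
          rw [hfun]
          exact tprod_ne_zero_aux hq0 hq1 (-1) 2 (fun n => by
            have := one_sub_zpow_ne_zero hq1 ((2:ℤ) + 2*(n:ℤ)) (by omega)
            intro h
            exact this (by linear_combination h))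
        have hPjne : (∏' n : ℕ, (1 - q ^ (2 + 2*j - 2*c + 2*(n:ℤ)))) ≠ 0 := by
          intro h0
          apply hPFne
          rw [hPF, h0, mul_zero]
        have hC2ne : C2 ≠ 0 := by
          rw [hC2def]
          have hfun : (fun n : ℕ => 1 + κ₂ * q ^ (2*j - 2*k + 2*(n:ℤ) + 1))
              = fun n : ℕ => 1 + κ₂ * q ^ ((2*j - 2*k + 1) + 2*(n:ℤ)) := by
            funext t
            rw [show 2*j - 2*k + 2*(t:ℤ) + 1 = (2*j - 2*k + 1) + 2*(t:ℤ) by ring]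
          rw [hfun]
          refine tprod_ne_zero_aux hq0 hq1 κ₂ _ (fun n => ?_)
          intro h
          apply hreg (k - j - (n:ℤ) - 1)
          have hqE : q ^ ((2*j - 2*k + 1) + 2*(n:ℤ)) ≠ 0 := zpow_ne_zero _ hq0
          rw [show 2*(k - j - (n:ℤ) - 1) + 1 = -((2*j - 2*k + 1) + 2*(n:ℤ)) by ring, zpow_neg]
          field_simp
          linear_combination h
        have hfin' : (∏ t ∈ Finset.range M, (1 - q ^ (2*k - 2*b - 2*r + 2*(t:ℤ))))
            = (-1:ℂ)^M * q ^ (-(M:ℤ)^2 - (M:ℤ)) * qpoch q M := by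
          rw [show (∏ t ∈ Finset.range M, (1 - q ^ (2*k - 2*b - 2*r + 2*(t:ℤ))))
              = ∏ t ∈ Finset.range M, (1 - q ^ (2*(t:ℤ) - 2*((M:ℕ):ℤ)))
            from Finset.prod_congr rfl fun t _ => by rw [show 2*k - 2*b - 2*r + 2*(t:ℤ)
              = 2*(t:ℤ) - 2*((M:ℕ):ℤ) by omega]]
          rw [hfin_aux hq0 M, hqpoch_conv]
        have hA : (-q * κ₁ * κ₃⁻¹ * q ^ (2*i)) ^ M
            = (-1:ℂ)^M * κ₁^M * κ₃⁻¹^M * q ^ ((1 + 2*i) * (M:ℤ)) := by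
          rw [show -q * κ₁ * κ₃⁻¹ * q ^ (2*i) = ((-1) * κ₁ * κ₃⁻¹) * q ^ ((1:ℤ) + 2*i) by
            rw [zpow_add₀ hq0, zpow_one]; ring]
          rw [mul_pow, ← zpow_natCast (q ^ ((1:ℤ) + 2*i)), ← zpow_mul]
          ring
        rw [hκpow, hPF, hfin', hA]
        have hq5 : q ^ ((n₀:ℤ)^2 - 2*a*(n₀:ℤ))
              * q ^ ((b - (c+(n₀:ℤ))) * (b - (c+(n₀:ℤ)) - 2*(a + b - (c+(n₀:ℤ))))
                    - 2*r*(a + b - (c+(n₀:ℤ))))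
              * q ^ ((1 + 2*i) * (M:ℤ)) * q ^ (-(M:ℤ)^2 - (M:ℤ))
            = q ^ ((c - k + r) * (c + k - r - 2*b) + 2*i*(c - k)) := by
          rw [← zpow_add₀ hq0, ← zpow_add₀ hq0, ← zpow_add₀ hq0]
          congr 1
          rw [hn₀, hm, show a = i + j - b by omega]
          ring
        have hsq : (-1:ℂ) ^ M * (-1:ℂ) ^ M = 1 := by
          rw [← mul_pow]; norm_num
        exact final_algebra _ _ _ _ _ _ _ _ _ _ _ _ _ hPjne hC2ne (hQne n₀) (hQne M)
          (zpow_ne_zero _ hq0) hsq hq5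
      · -- c > j : both sides vanish
        have hzero : ∀ n : ℕ,
            D2term q (Pop q r (D3 q κ₁ κ₃ (D4 q κ₂ (delta i j k)))) (a, b, c) n = 0 := by
          intro n
          simp only [D2term]
          rw [hG a b (c + n), if_neg, mul_zero]
          rintro ⟨-, h2, -⟩
          omega
        rw [tsum_congr hzero, tsum_zero, mul_zero]
        have hPj0 : (∏' n : ℕ, (1 - q ^ (2 + 2 * j - 2 * c + 2 * (n : ℤ)))) = 0 := by
          apply tprod_eq_zero_of_factor _ (c - j - 1).toNat
          rw [show (2 + 2 * j - 2 * c + 2 * (((c - j - 1).toNat : ℕ) : ℤ)) = 0 by omega,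
            zpow_zero, sub_self]
        rw [hPj0, mul_zero, zero_div]
    · rw [if_neg hcond, hRop]
      have hzero : ∀ n : ℕ,
          D2term q (Pop q r (D3 q κ₁ κ₃ (D4 q κ₂ (delta i j k)))) (a, b, c) n = 0 := by
        intro n
        simp only [D2term]
        rw [hG a b (c + n), if_neg, mul_zero]
        rintro ⟨h1, h2, h3⟩
        exact hcond ⟨by omega, by omega⟩
      rw [tsum_congr hzero, tsum_zero, mul_zero]

end
end

section
/- The affine maps T_{ijk} satisfy the tetrahedron equation: T₄₅₆ ∘ T₂₃₆ ∘ T₁₃₅ ∘ T₁₂₄ = T₁₂₄ ∘ T₁₃₅ ∘ T₂₃₆ ∘ T₄₅₆ as affine endomorphisms of ℂ¹². -/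
/- STATEMENT 3: the affine maps T_{ijk} (the monomial parts τ^{uw} of the cluster
transformation R̂_{ijk} for the sign choice (−,−,+,+), in canonical variables)
satisfy the tetrahedron equation T₄₅₆∘T₂₃₆∘T₁₃₅∘T₁₂₄ = T₁₂₄∘T₁₃₅∘T₂₃₆∘T₄₅₆
as affine endomorphisms of ℂ¹². -/

noncomputable section

/-- ℂ¹² with coordinates (u₁,…,u₆,w₁,…,w₆) (0-based indexing). -/
abbrev Pt : Type := (Fin 6 → ℂ) × (Fin 6 → ℂ)

/-- The affine map T_{ijk} replacing (u_i,w_i,u_j,w_j,u_k,w_k) by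
(u_i+w_j−w_k+λ_j−λ_k, w_i+w_j−w_k, u_i+u_k−w_i, w_k, −u_i+u_j+w_i, w_j+λ_j−λ_k)
and fixing all other coordinates. -/
def Tmap (lam : Fin 6 → ℂ) (i j k : Fin 6) (p : Pt) : Pt :=
  (fun t =>
      if t = i then p.1 i + p.2 j - p.2 k + lam j - lam k
      else if t = j then p.1 i + p.1 k - p.2 i
      else if t = k then -p.1 i + p.1 j + p.2 i
      else p.1 t,
   fun t =>
      if t = i then p.2 i + p.2 j - p.2 k
      else if t = j then p.2 k
      else if t = k then p.2 j + lam j - lam k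
      else p.2 t)

set_option maxHeartbeats 1000000 in
/-- The tetrahedron equation for T (indices 1,…,6 represented 0-based). -/
theorem tetrahedron_T (lam : Fin 6 → ℂ) :
    (Tmap lam 3 4 5) ∘ (Tmap lam 1 2 5) ∘ (Tmap lam 0 2 4) ∘ (Tmap lam 0 1 3) =
    (Tmap lam 0 1 3) ∘ (Tmap lam 0 2 4) ∘ (Tmap lam 1 2 5) ∘ (Tmap lam 3 4 5) := by
  funext p
  refine Prod.ext (funext fun t => ?_) (funext fun t => ?_) <;>
    fin_cases t <;>
    simp only [Tmap, Function.comp_apply, Fin.zero_eta, Fin.mk_one, Fin.isValue,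
      show ((0:Fin 6) = 0) = True from by decide, show ((0:Fin 6) = 1) = False from by decide, show ((0:Fin 6) = 2) = False from by decide, show ((0:Fin 6) = 3) = False from by decide, show ((0:Fin 6) = 4) = False from by decide, show ((0:Fin 6) = 5) = False from by decide, show ((1:Fin 6) = 0) = False from by decide, show ((1:Fin 6) = 1) = True from by decide, show ((1:Fin 6) = 2) = False from by decide, show ((1:Fin 6) = 3) = False from by decide, show ((1:Fin 6) = 4) = False from by decide, show ((1:Fin 6) = 5) = False from by decide, show ((2:Fin 6) = 0) = False from by decide, show ((2:Fin 6) = 1) = False from by decide, show ((2:Fin 6) = 2) = True from by decide, show ((2:Fin 6) = 3) = False from by decide, show ((2:Fin 6) = 4) = False from by decide, show ((2:Fin 6) = 5) = False from by decide, show ((3:Fin 6) = 0) = False from by decide, show ((3:Fin 6) = 1) = False from by decide, show ((3:Fin 6) = 2) = False from by decide, show ((3:Fin 6) = 3) = True from by decide, show ((3:Fin 6) = 4) = False from by decide, show ((3:Fin 6) = 5) = False from by decide, show ((4:Fin 6) = 0) = False from by decide, show ((4:Fin 6) = 1) = False from by decide, show ((4:Fin 6) = 2) = False from by decide, show ((4:Fin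 6) = 3) = False from by decide, show ((4:Fin 6) = 4) = True from by decide, show ((4:Fin 6) = 5) = False from by decide, show ((5:Fin 6) = 0) = False from by decide, show ((5:Fin 6) = 1) = False from by decide, show ((5:Fin 6) = 2) = False from by decide, show ((5:Fin 6) = 3) = False from by decide, show ((5:Fin 6) = 4) = False from by decide, show ((5:Fin 6) = 5) = True from by decide, show ((⟨0, by omega⟩ : Fin 6) = 0) = True from by decide, show ((⟨0, by omega⟩ : Fin 6) = 1) = False from by decide, show ((⟨0, by omega⟩ : Fin 6) = 2) = False from by decide, show ((⟨0, by omega⟩ : Fin 6) = 3) = False from by decide, show ((⟨0, by omega⟩ : Fin 6) = 4) = False from by decide, show ((⟨0, by omega⟩ : Fin 6) = 5) = False from by decide, show ((⟨1, by omega⟩ : Fin 6) = 0) = False from by decide, show ((⟨1, by omega⟩ : Fin 6) = 1) = True from by decide, show ((⟨1, by omega⟩ : Fin 6) = 2) = False from by decide, show ((⟨1, by omega⟩ : Fin 6) = 3) = False from by decide, show ((⟨1, by omega⟩ : Fin 6) = 4) = False from by decide, show ((⟨1, by omega⟩ : Fin 6) = 5) = False from by decide, show ((⟨2, by omega⟩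 : Fin 6) = 0) = False from by decide, show ((⟨2, by omega⟩ : Fin 6) = 1) = False from by decide, show ((⟨2, by omega⟩ : Fin 6) = 2) = True from by decide, show ((⟨2, by omega⟩ : Fin 6) = 3) = False from by decide, show ((⟨2, by omega⟩ : Fin 6) = 4) = False from by decide, show ((⟨2, by omega⟩ : Fin 6) = 5) = False from by decide, show ((⟨3, by omega⟩ : Fin 6) = 0) = False from by decide, show ((⟨3, by omega⟩ : Fin 6) = 1) = False from by decide, show ((⟨3, by omega⟩ : Fin 6) = 2) = False from by decide, show ((⟨3, by omega⟩ : Fin 6) = 3) = True from by decide, show ((⟨3, by omega⟩ : Fin 6) = 4) = False from by decide, show ((⟨3, by omega⟩ : Fin 6) = 5) = False from by decide, show ((⟨4, by omega⟩ : Fin 6) = 0) = False from by decide, show ((⟨4, by omega⟩ : Fin 6) = 1) = False from by decide, show ((⟨4, by omega⟩ : Fin 6) = 2) = False from by decide, show ((⟨4, by omega⟩ : Fin 6) = 3) = False from by decide, show ((⟨4, by omega⟩ : Fin 6) = 4) = True from by decide, show ((⟨4, by omega⟩ : Fin 6) = 5) = False from by decide, show ((⟨5, by omega⟩ : Fin 6)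 = 0) = False from by decide, show ((⟨5, by omega⟩ : Fin 6) = 1) = False from by decide, show ((⟨5, by omega⟩ : Fin 6) = 2) = False from by decide, show ((⟨5, by omega⟩ : Fin 6) = 3) = False from by decide, show ((⟨5, by omega⟩ : Fin 6) = 4) = False from by decide, show ((⟨5, by omega⟩ : Fin 6) = 5) = True from by decide, if_true, if_false] <;>
    ring

end
end

section
/- The affine maps S_{ijk} satisfy the tetrahedron equation: S₄₅₆ ∘ S₂₃₆ ∘ S₁₃₅ ∘ S₁₂₄ = S₁₂₄ ∘ S₁₃₅ ∘ S₂₃₆ ∘ S₄₅₆ as affine endomorphisms of ℂ¹². -/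
/- STATEMENT 4: the affine maps S_{ijk} (the monomial parts τ^{uw} of the cluster
transformation R̂_{ijk} for the sign choice (+,−,+,−), in canonical variables)
satisfy the tetrahedron equation S₄₅₆∘S₂₃₆∘S₁₃₅∘S₁₂₄ = S₁₂₄∘S₁₃₅∘S₂₃₆∘S₄₅₆
as affine endomorphisms of ℂ¹². -/

noncomputable section

/-- The affine map S_{ijk} replacing (u_i,w_i,u_j,w_j,u_k,w_k) by
(u_j−λ_i+λ_j, u_k+w_j−w_k, u_i, −u_k+w_i+w_k, −u_i+u_j+u_k, −u_i+u_j+w_k−λ_i+λ_j)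
and fixing all other coordinates. -/
def Smap (lam : Fin 6 → ℂ) (i j k : Fin 6) (p : Pt) : Pt :=
  (fun t =>
      if t = i then p.1 j - lam i + lam j
      else if t = j then p.1 i
      else if t = k then -p.1 i + p.1 j + p.1 k
      else p.1 t,
   fun t =>
      if t = i then p.1 k + p.2 j - p.2 k
      else if t = j then -p.1 k + p.2 i + p.2 k
      else if t = k then -p.1 i + p.1 j + p.2 k - lam i + lam j
      else p.2 t)

private lemma funext6 {f g : Fin 6 → ℂ} (h0 : f 0 = g 0) (h1 : f 1 = g 1)
    (h2 : f 2 = g 2) (h3 : f 3 = g 3) (h4 : f 4 = g 4) (h5 : f 5 = g 5) : f = g := by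
  funext t; fin_cases t <;> assumption

set_option maxHeartbeats 4000000 in
/-- The tetrahedron equation for S (indices 1,…,6 represented 0-based). -/
theorem tetrahedron_S (lam : Fin 6 → ℂ) :
    (Smap lam 3 4 5) ∘ (Smap lam 1 2 5) ∘ (Smap lam 0 2 4) ∘ (Smap lam 0 1 3) =
    (Smap lam 0 1 3) ∘ (Smap lam 0 2 4) ∘ (Smap lam 1 2 5) ∘ (Smap lam 3 4 5) := by
  funext p
  refine Prod.ext (funext6 ?_ ?_ ?_ ?_ ?_ ?_) (funext6 ?_ ?_ ?_ ?_ ?_ ?_) <;>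
    simp only [Function.comp_apply, Smap, Fin.reduceEq, reduceIte] <;> ring

end
end

section
/- The sign choices (+,−,+,−) and (−,−,+,+) are related by the canonical involution: S₁₂₃ with parameters (λ₁,λ₂,λ₃) equals σ ∘ T̃₁₂₃ ∘ σ, where T̃₁₂₃ denotes T₁₂₃ with the parameters (λ₁,λ₂,λ₃) replaced by (λ₃,λ₂,λ₁), and σ is the linear involution of ℂ¹² sending u_i ↦ w_{4−i} and w_i ↦ u_{4−i} for i = 1,2,3 and fixing all coordinates with indices 4,5,6. -/
/- STATEMENT 5: S₁₂₃ with parameters (λ₁,λ₂,λ₃) equals σ ∘ T̃₁₂₃ ∘ σ, where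
T̃₁₂₃ is T₁₂₃ with the parameters (λ₁,λ₂,λ₃) replaced by (λ₃,λ₂,λ₁), and σ is the
linear involution u_i ↦ w_{4−i}, w_i ↦ u_{4−i} (i = 1,2,3), fixing the
coordinates with indices 4,5,6. -/

noncomputable section

/-- The index involution i ↦ 4−i on the first three (1-based) indices,
0-based: 0 ↔ 2, 1 ↦ 1, identity on 3,4,5. -/
def flip3 : Fin 6 → Fin 6 := ![2, 1, 0, 3, 4, 5]

/-- The linear involution σ of ℂ¹² sending u_i ↦ w_{4−i} and w_i ↦ u_{4−i} for
i = 1,2,3 and fixing all coordinates with indices 4,5,6. -/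
def sigmaMap (p : Pt) : Pt :=
  (fun t => if t.val < 3 then p.2 (flip3 t) else p.1 t,
   fun t => if t.val < 3 then p.1 (flip3 t) else p.2 t)

/-- S₁₂₃(λ₁,λ₂,λ₃) = σ ∘ T₁₂₃(λ₃,λ₂,λ₁) ∘ σ (indices 1,2,3 represented
0-based as 0,1,2). -/
theorem S_eq_sigma_T_sigma (lam : Fin 6 → ℂ) :
    Smap lam 0 1 2 =
      sigmaMap ∘ Tmap ![lam 2, lam 1, lam 0, lam 3, lam 4, lam 5] 0 1 2 ∘ sigmaMap := by
  funext p
  simp only [Smap, Tmap, sigmaMap, flip3, Function.comp]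
  refine Prod.ext ?_ ?_ <;> funext t <;> fin_cases t <;> simp <;> ring

end
end

section
/- Conjugation by P implements the affine substitution τ^{uw}_{−−++} on the canonical generators: as operators on V₃ one has P∘E^{u₁} = q^{2r} E^{u₁}E^{w₂}E^{−w₃}∘P, P∘E^{w₁} = E^{w₁}E^{w₂}E^{−w₃}∘P, P∘E^{u₂} = q E^{u₃}E^{u₁}E^{−w₁}∘P, P∘E^{w₂} = E^{w₃}∘P, P∘E^{u₃} = q E^{u₂}E^{−u₁}E^{w₁}∘P, and P∘E^{w₃} = q^{2r} E^{w₂}∘P. -/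
/- STATEMENT 6: conjugation by P implements the affine substitution τ^{uw}_{−−++}
on the canonical generators of the q-Weyl algebras, as operators on V₃. -/

noncomputable section

/-- E^{u₁}: shift operator lowering the first index by 1 (on basis vectors);
on functions, (E^{u₁}f)(a,b,c) = f(a+1,b,c). -/
def Eu1 (f : W3) : W3 := fun p => f (p.1 + 1, p.2.1, p.2.2)
def Eu2 (f : W3) : W3 := fun p => f (p.1, p.2.1 + 1, p.2.2)
def Eu3 (f : W3) : W3 := fun p => f (p.1, p.2.1, p.2.2 + 1)
/-- E^{−u₁}: the inverse shift, raising the first index by 1. -/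
def Eiu1 (f : W3) : W3 := fun p => f (p.1 - 1, p.2.1, p.2.2)
def Eiu2 (f : W3) : W3 := fun p => f (p.1, p.2.1 - 1, p.2.2)
def Eiu3 (f : W3) : W3 := fun p => f (p.1, p.2.1, p.2.2 - 1)
/-- E^{w₁}: diagonal operator multiplying |m₁,m₂,m₃⟩ by q^{2m₁}. -/
def Ew1 (q : ℂ) (f : W3) : W3 := fun p => q ^ (2 * p.1) * f p
def Ew2 (q : ℂ) (f : W3) : W3 := fun p => q ^ (2 * p.2.1) * f p
def Ew3 (q : ℂ) (f : W3) : W3 := fun p => q ^ (2 * p.2.2) * f p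
/-- E^{−w₁}: diagonal operator multiplying |m₁,m₂,m₃⟩ by q^{−2m₁}. -/
def Eiw1 (q : ℂ) (f : W3) : W3 := fun p => q ^ (-(2 * p.1)) * f p
def Eiw2 (q : ℂ) (f : W3) : W3 := fun p => q ^ (-(2 * p.2.1)) * f p
def Eiw3 (q : ℂ) (f : W3) : W3 := fun p => q ^ (-(2 * p.2.2)) * f p

/-- Y₁ = κ₂⁻¹E^{−w₂}. -/
def Y1 (q κ₂ : ℂ) (f : W3) : W3 := κ₂⁻¹ • Eiw2 q f
/-- Y₂ = κ₂E^{u₂}. -/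
def Y2 (κ₂ : ℂ) (f : W3) : W3 := κ₂ • Eu2 f
/-- Y₃ = κ₁⁻¹E^{−w₁}. -/
def Y3 (q κ₁ : ℂ) (f : W3) : W3 := κ₁⁻¹ • Eiw1 q f
/-- Y₄ = κ₁E^{u₁}E^{−u₂}. -/
def Y4 (κ₁ : ℂ) (f : W3) : W3 := κ₁ • Eu1 (Eiu2 f)
/-- Y₅ = κ₃⁻¹E^{w₂}E^{−w₃}. -/
def Y5 (q κ₃ : ℂ) (f : W3) : W3 := κ₃⁻¹ • Ew2 q (Eiw3 q f)
/-- Y₆ = κ₃E^{u₃}. -/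
def Y6 (κ₃ : ℂ) (f : W3) : W3 := κ₃ • Eu3 f
/-- Y₇ = E^{−u₁}. -/
def Y7 (f : W3) : W3 := Eiu1 f
/-- Y₈ = E^{w₁}E^{−u₃}. -/
def Y8 (q : ℂ) (f : W3) : W3 := Ew1 q (Eiu3 f)
/-- Y₉ = E^{w₃}. -/
def Y9 (q : ℂ) (f : W3) : W3 := Ew3 q f

/-- Y′₁ = κ₃⁻¹E^{−w₃}. -/
def Y1' (q κ₃ : ℂ) (f : W3) : W3 := κ₃⁻¹ • Eiw3 q f
/-- Y′₂ = κ₁E^{u₁}. -/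
def Y2' (κ₁ : ℂ) (f : W3) : W3 := κ₁ • Eu1 f
/-- Y′₃ = E^{−u₃}. -/
def Y3' (f : W3) : W3 := Eiu3 f
/-- Y′₄ = κ₂E^{u₂}E^{−u₁}. -/
def Y4' (κ₂ : ℂ) (f : W3) : W3 := κ₂ • Eu2 (Eiu1 f)
/-- Y′₅ = κ₂⁻¹E^{w₃}E^{−w₂}. -/
def Y5' (q κ₂ : ℂ) (f : W3) : W3 := κ₂⁻¹ • Ew3 q (Eiw2 q f)
/-- Y′₆ = E^{w₁}. -/
def Y6' (q : ℂ) (f : W3) : W3 := Ew1 q f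
/-- Y′₇ = E^{−u₂}. -/
def Y7' (f : W3) : W3 := Eiu2 f
/-- Y′₈ = κ₁⁻¹κ₃E^{u₃}E^{−w₁}. -/
def Y8' (q κ₁ κ₃ : ℂ) (f : W3) : W3 := (κ₁⁻¹ * κ₃) • Eu3 (Eiw1 q f)
/-- Y′₉ = E^{w₂}. -/
def Y9' (q : ℂ) (f : W3) : W3 := Ew2 q f

/-- P∘E^{u₁} = q^{2r}E^{u₁}E^{w₂}E^{−w₃}∘P, P∘E^{w₁} = E^{w₁}E^{w₂}E^{−w₃}∘P,
P∘E^{u₂} = qE^{u₃}E^{u₁}E^{−w₁}∘P, P∘E^{w₂} = E^{w₃}∘P,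
P∘E^{u₃} = qE^{u₂}E^{−u₁}E^{w₁}∘P, P∘E^{w₃} = q^{2r}E^{w₂}∘P, on V₃. -/
theorem Pop_conjugation (q : ℂ) (hq : q ≠ 0) (r : ℤ) :
    ∀ f : W3, (Function.support f).Finite →
      (Pop q r (Eu1 f) = q ^ (2 * r) • Eu1 (Ew2 q (Eiw3 q (Pop q r f)))) ∧
      (Pop q r (Ew1 q f) = Ew1 q (Ew2 q (Eiw3 q (Pop q r f)))) ∧
      (Pop q r (Eu2 f) = q • Eu3 (Eu1 (Eiw1 q (Pop q r f)))) ∧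
      (Pop q r (Ew2 q f) = Ew3 q (Pop q r f)) ∧
      (Pop q r (Eu3 f) = q • Eu2 (Eiu1 (Ew1 q (Pop q r f)))) ∧
      (Pop q r (Ew3 q f) = q ^ (2 * r) • Ew2 q (Pop q r f)) := by
  
  intro f _
  have qmul : ∀ a : ℤ, q * q ^ a = q ^ (1 + a) := fun a => (zpow_one_add₀ hq a).symm
  refine ⟨?_, ?_, ?_, ?_, ?_, ?_⟩ <;> funext p <;>
    simp only [Pop, Eu1, Eu2, Eu3, Eiu1, Ew1, Ew2, Ew3, Eiw1, Eiw3, Pi.smul_apply,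
      smul_eq_mul, ← mul_assoc, qmul, ← zpow_add₀ hq] <;>
  · congr 2 <;> ring

end
end

section
/- The operator P intertwines the primed Y-operators with the monomial images of the mutation sequence τ_{−−++}: as operators on V₃ one has P∘Y′₁ = Y₁∘P, P∘Y′₂ = Y₂Y₄Y₅∘P, P∘Y′₃ = q^{-1}Y₃Y₄∘P, P∘Y′₄ = qY₅^{-1}Y₈^{-1}∘P, P∘Y′₅ = Y₅∘P, P∘Y′₆ = Y₅Y₆Y₈∘P, P∘Y′₇ = qY₇Y₈∘P, P∘Y′₈ = qY₄^{-1}Y₅^{-1}∘P, and P∘Y′₉ = Y₉∘P. -/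
set_option maxHeartbeats 2000000


/- STATEMENT 7: P intertwines the primed Y-operators with the monomial images
of the mutation sequence τ_{−−++}, as operators on V₃. -/

noncomputable section

/-- Y₄⁻¹ = κ₁⁻¹E^{−u₁}E^{u₂}, the two-sided inverse of Y₄ = κ₁E^{u₁}E^{−u₂}. -/
def Y4inv (κ₁ : ℂ) (f : W3) : W3 := κ₁⁻¹ • Eiu1 (Eu2 f)
/-- Y₅⁻¹ = κ₃E^{−w₂}E^{w₃}, the two-sided inverse of Y₅ = κ₃⁻¹E^{w₂}E^{−w₃}. -/
def Y5inv (q κ₃ : ℂ) (f : W3) : W3 := κ₃ • Eiw2 q (Ew3 q f)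
/-- Y₈⁻¹ = E^{−w₁}E^{u₃}, the two-sided inverse of Y₈ = E^{w₁}E^{−u₃}. -/
def Y8inv (q : ℂ) (f : W3) : W3 := Eiw1 q (Eu3 f)

/-- P∘Y′₁ = Y₁∘P, P∘Y′₂ = Y₂Y₄Y₅∘P, P∘Y′₃ = q⁻¹Y₃Y₄∘P, P∘Y′₄ = qY₅⁻¹Y₈⁻¹∘P,
P∘Y′₅ = Y₅∘P, P∘Y′₆ = Y₅Y₆Y₈∘P, P∘Y′₇ = qY₇Y₈∘P, P∘Y′₈ = qY₄⁻¹Y₅⁻¹∘P,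
P∘Y′₉ = Y₉∘P, on V₃. -/
theorem Pop_intertwines_tau (q : ℂ) (hq : q ≠ 0) (κ₁ κ₂ κ₃ : ℂ)
    (hκ₁ : κ₁ ≠ 0) (hκ₂ : κ₂ ≠ 0) (hκ₃ : κ₃ ≠ 0) (r : ℤ)
    (hrel : κ₂ = κ₃ * q ^ (2 * r)) :
    ∀ f : W3, (Function.support f).Finite →
      (Pop q r (Y1' q κ₃ f) = Y1 q κ₂ (Pop q r f)) ∧
      (Pop q r (Y2' κ₁ f) = Y2 κ₂ (Y4 κ₁ (Y5 q κ₃ (Pop q r f)))) ∧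
      (Pop q r (Y3' f) = q⁻¹ • Y3 q κ₁ (Y4 κ₁ (Pop q r f))) ∧
      (Pop q r (Y4' κ₂ f) = q • Y5inv q κ₃ (Y8inv q (Pop q r f))) ∧
      (Pop q r (Y5' q κ₂ f) = Y5 q κ₃ (Pop q r f)) ∧
      (Pop q r (Y6' q f) = Y5 q κ₃ (Y6 κ₃ (Y8 q (Pop q r f)))) ∧
      (Pop q r (Y7' f) = q • Y7 (Y8 q (Pop q r f))) ∧
      (Pop q r (Y8' q κ₁ κ₃ f) = q • Y4inv κ₁ (Y5inv q κ₃ (Pop q r f))) ∧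
      (Pop q r (Y9' q f) = Y9 q (Pop q r f)) := by

  intro f _
  have hmerge : ∀ x y : ℤ, q ^ x * q ^ y = q ^ (x + y) :=
    fun x y => (zpow_add₀ hq x y).symm
  have hR : ∀ (z : ℂ) (x y : ℤ), q ^ x * (q ^ y * z) = q ^ (x + y) * z :=
    fun z x y => by rw [← mul_assoc, ← zpow_add₀ hq]
  have hq1 : ∀ (z : ℂ) (x : ℤ), q * (q ^ x * z) = q ^ (1 + x) * z :=
    fun z x => by rw [← mul_assoc, ← zpow_one_add₀ hq]
  have hq1' : ∀ (z : ℂ) (x : ℤ), q ^ x * (q * z) = q ^ (x + 1) * z :=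
    fun z x => by rw [← mul_assoc, ← zpow_add_one₀ hq]
  have hq2 : ∀ x : ℤ, q * q ^ x = q ^ (1 + x) :=
    fun x => (zpow_one_add₀ hq x).symm
  have hq2' : ∀ x : ℤ, q ^ x * q = q ^ (x + 1) :=
    fun x => (zpow_add_one₀ hq x).symm
  have hk : ∀ (z w : ℂ), w ≠ 0 → w⁻¹ * (w * z) = z :=
    fun z w hw => by rw [← mul_assoc, inv_mul_cancel₀ hw, one_mul]
  have hk' : ∀ (z w : ℂ), w ≠ 0 → w * (w⁻¹ * z) = z :=
    fun z w hw => by rw [← mul_assoc, mul_inv_cancel₀ hw, one_mul]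
  refine ⟨?_, ?_, ?_, ?_, ?_, ?_, ?_, ?_, ?_⟩ <;>
  · funext p
    obtain ⟨a, b, c⟩ := p
    simp only [Pop, Y1, Y2, Y3, Y4, Y5, Y6, Y7, Y8, Y9, Y1', Y2', Y3', Y4',
      Y5', Y6', Y7', Y8', Y9', Y4inv, Y5inv, Y8inv, Eu1, Eu2, Eu3, Eiu1, Eiu2,
      Eiu3, Ew1, Ew2, Ew3, Eiw1, Eiw2, Eiw3, Pi.smul_apply, smul_eq_mul, hrel,
      mul_inv, inv_inv, ← zpow_neg q, ← zpow_neg_one q]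
    try simp only [mul_comm, mul_left_comm, mul_assoc, hR, hmerge, hq1, hq1',
      hq2, hq2', hk _ _ hκ₁, hk _ _ hκ₂, hk _ _ hκ₃, hk' _ _ hκ₁,
      hk' _ _ hκ₂, hk' _ _ hκ₃, inv_mul_cancel₀ hκ₁, inv_mul_cancel₀ hκ₂,
      inv_mul_cancel₀ hκ₃, mul_inv_cancel₀ hκ₁, mul_inv_cancel₀ hκ₂,
      mul_inv_cancel₀ hκ₃, one_mul, mul_one]
    try ring_nf
    try simp only [mul_assoc, hR, hmerge, hq1, hq1', hq2, hq2']
    try ring_nf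


end
end
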